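/- Let H = (X, E) be a graph. Construct an election with one candidate per vertex and one voter per edge, where the voter for edge e = {x_i, x_j} ranks c_i and c_j (ordered by index) in the top two positions and the remaining m − 2 candidates below. Use the Chamberlin–Courant rule with a positional scoring vector s satisfying s₁ = s₂ and s₂ > s_i for all i ≥ 3. Then H has a vertex cover of size at most k if and only if there exists a committee W of size at most k whose CC score equals |E|·s₁ (the maximum possible), i.e., every voter has one of her top-2 candidates in W. -/

import Mathlib

/-- CC reduction: with one voter per edge ranking the two endpoints on top,
and a scoring vector with s₁ = s₂ > s_i (i ≥ 3), H has a vertex cover of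
size ≤ k iff some committee W of size ≤ k attains CC score |E| · s₁,
i.e. every voter has one of her top-2 candidates in W. -/
theorem stmt_7 {X : Type*} [Fintype X] [DecidableEq X]
    (m k : ℕ) (hm : 2 ≤ m) (hcard : Fintype.card X = m) (hk : 1 ≤ k)
    [Nonempty X]
    (E : Finset (Finset X)) (hE : ∀ e ∈ E, e.card = 2)
    (pos : Finset X → (X ≃ Fin m))
    (htop : ∀ e ∈ E, ∀ x : X, ((pos e x : Fin m) : ℕ) < 2 ↔ x ∈ e)
    (s : Fin m → ℝ)
    (hs12 : s ⟨0, by omega⟩ = s ⟨1, by omega⟩)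
    (hmono : ∀ i j : Fin m, i ≤ j → s j ≤ s i)
    (hstrict : ∀ i : Fin m, 2 ≤ (i : ℕ) → s i < s ⟨1, by omega⟩) :
    (∃ S : Finset X, S.card ≤ k ∧ ∀ e ∈ E, (e ∩ S).Nonempty) ↔
    (∃ W : Finset X, ∃ hW : W.Nonempty, W.card ≤ k ∧
      (∑ e ∈ E, s ((W.image (pos e)).min' (hW.image _))) =
        (E.card : ℝ) * s ⟨0, by omega⟩) := by
  have key : ∀ (W : Finset X) (hW : W.Nonempty), ∀ e ∈ E,
      ((e ∩ W).Nonempty ↔ s ((W.image (pos e)).min' (hW.image _)) = s ⟨0, by omega⟩) := by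
    intro W hW e he
    set a := (W.image (pos e)).min' (hW.image _) with ha
    constructor
    · rintro ⟨x, hx⟩
      rw [Finset.mem_inter] at hx
      have hx2 : ((pos e x : Fin m) : ℕ) < 2 := (htop e he x).mpr hx.1
      have hmin : a ≤ pos e x := Finset.min'_le _ _ (Finset.mem_image_of_mem _ hx.2)
      have hlt : (a : ℕ) < 2 := lt_of_le_of_lt hmin hx2
      have : (a : ℕ) = 0 ∨ (a : ℕ) = 1 := by omega
      rcases this with h | h
      · have : a = (⟨0, by omega⟩ : Fin m) := Fin.ext h
        rw [this]
      · have : a = (⟨1, by omega⟩ : Fin m) := Fin.ext h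
        rw [this, hs12]
    · intro hseq
      by_contra hne
      have hamem : a ∈ W.image (pos e) := Finset.min'_mem _ _
      obtain ⟨x, hxW, hxa⟩ := Finset.mem_image.mp hamem
      have hge : 2 ≤ (a : ℕ) := by
        by_contra h
        push_neg at h
        have : x ∈ e := (htop e he x).mp (by rw [hxa]; exact h)
        exact hne ⟨x, Finset.mem_inter.mpr ⟨this, hxW⟩⟩
      have := hstrict a hge
      rw [hseq, hs12] at this
      exact lt_irrefl _ this
  have hle : ∀ (W : Finset X) (hW : W.Nonempty), ∀ e ∈ E,
      s ((W.image (pos e)).min' (hW.image _)) ≤ s ⟨0, by omega⟩ := by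
    intro W hW e he
    exact hmono _ _ (by simp [Fin.le_def])
  constructor
  · rintro ⟨S, hScard, hScov⟩
    by_cases hS : S.Nonempty
    · refine ⟨S, hS, hScard, ?_⟩
      rw [Finset.sum_congr rfl (fun e he => (key S hS e he).mp (by
        obtain ⟨x, hx⟩ := hScov e he
        exact ⟨x, hx⟩))]
      rw [Finset.sum_const, nsmul_eq_mul]
    · have hEempty : E = ∅ := by
        by_contra h
        obtain ⟨e, he⟩ := Finset.nonempty_iff_ne_empty.mpr h
        obtain ⟨x, hx⟩ := hScov e he
        exact hS ⟨x, (Finset.mem_inter.mp hx).2⟩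
      obtain ⟨x0⟩ := ‹Nonempty X›
      refine ⟨{x0}, ⟨x0, Finset.mem_singleton_self x0⟩, by simpa, ?_⟩
      simp [hEempty]
  · rintro ⟨W, hW, hWcard, hsum⟩
    refine ⟨W, hWcard, ?_⟩
    intro e he
    rw [key W hW e he]
    by_contra hne
    have hltterm : s ((W.image (pos e)).min' (hW.image _)) < s ⟨0, by omega⟩ :=
      lt_of_le_of_ne (hle W hW e he) hne
    have hlt : (∑ e ∈ E, s ((W.image (pos e)).min' (hW.image _))) <
        ∑ _e ∈ E, s (⟨0, by omega⟩ : Fin m) := by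
      apply Finset.sum_lt_sum (fun i hi => hle W hW i hi) ⟨e, he, hltterm⟩
    rw [Finset.sum_const, nsmul_eq_mul] at hlt
    rw [hsum] at hlt
    exact lt_irrefl _ hlt
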